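/- Let d and k be integers with 3 ≤ k ≤ d/2, and let P ⊂ ℝ^d be a centrally symmetric d-polytope with N vertices (N ≥ 2d). Then the number of (k−1)-dimensional faces of P satisfies f_{k−1}(P) ≤ (1 − 2^{−d}) · (N/(N−1)) · C(N,k). -/

import Mathlib

open Set

/-- A polytope: the convex hull of a finite set of points. -/
def IsPolytope {E : Type*} [AddCommGroup E] [Module ℝ E] (P : Set E) : Prop :=
  ∃ V : Finset E, P = convexHull ℝ (V : Set E)

/-- A (nonempty, proper) exposed face of `P`. -/
def IsProperFace {E : Type*} [AddCommGroup E] [Module ℝ E] [TopologicalSpace E]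
    (P F : Set E) : Prop :=
  F.Nonempty ∧ F ≠ P ∧ IsExposed ℝ P F

/-- The number of `j`-dimensional proper faces of `P`. -/
noncomputable def faceCount {d : ℕ} (P : Set (Fin d → ℝ)) (j : ℕ) : ℕ :=
  Set.ncard {F : Set (Fin d → ℝ) |
    IsProperFace P F ∧ Module.finrank ℝ (affineSpan ℝ F).direction = j}

open MeasureTheory
open scoped ENNReal


lemma amgm (a b : ℝ≥0∞) : 2 * a * b ≤ a ^ 2 + b ^ 2 := by
  rcases le_total a b with h | h
  · obtain ⟨c, rfl⟩ := exists_add_of_le h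
    calc 2 * a * (a + c) = (a ^ 2 + (a * c + a * c)) + a * a := by ring
      _ ≤ (a ^ 2 + (a * c + a * c)) + (a * a + c * c) := by gcongr; exact le_self_add
      _ = a ^ 2 + (a + c) ^ 2 := by ring
  · obtain ⟨c, rfl⟩ := exists_add_of_le h
    calc 2 * (b + c) * b = (b ^ 2 + (b * c + b * c)) + b * b := by ring
      _ ≤ (b ^ 2 + (b * c + b * c)) + (b * b + c * c) := by gcongr; exact le_self_add
      _ = (b + c) ^ 2 + b ^ 2 := by ring

variable {d : ℕ}

lemma properFace_disjoint_interior {P F : Set (Fin d → ℝ)}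
    (hF : IsProperFace P F) : F ∩ interior P = ∅ := by
  by_contra h
  obtain ⟨m, hmF, hmint⟩ := Set.nonempty_iff_ne_empty.2 h
  obtain ⟨l, hl⟩ := hF.2.2 hF.1
  obtain ⟨p, hpP, hpF⟩ := Set.exists_of_ssubset (ssubset_of_subset_of_ne hF.2.2.subset hF.2.1)
  have hmF' : m ∈ P ∧ ∀ y ∈ P, l y ≤ l m := by rw [hl] at hmF; exact hmF
  have hplt : l p < l m := by
    rw [hl] at hpF
    simp only [Set.mem_setOf_eq, not_and, not_forall, not_le] at hpF
    obtain ⟨y, hy, hyp⟩ := hpF hpP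
    exact lt_of_lt_of_le hyp (hmF'.2 y hy)
  obtain ⟨ε, hε, hball⟩ := Metric.isOpen_iff.1 isOpen_interior m hmint
  have hmp : m - p ≠ 0 := by
    intro h0
    rw [sub_eq_zero] at h0
    exact absurd h0 (by rintro rfl; exact lt_irrefl _ hplt)
  set t : ℝ := ε / (2 * ‖m - p‖) with ht
  have hnp : 0 < ‖m - p‖ := norm_pos_iff.2 hmp
  have htpos : 0 < t := div_pos hε (by positivity)
  have hz : m + t • (m - p) ∈ P := by
    apply interior_subset
    apply hball
    rw [Metric.mem_ball, dist_eq_norm]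
    have : m + t • (m - p) - m = t • (m - p) := by abel
    rw [this, norm_smul, Real.norm_eq_abs, abs_of_pos htpos]
    have : t * ‖m - p‖ = ε / 2 := by rw [ht]; field_simp
    rw [this]; linarith
  have hle := hmF'.2 _ hz
  have h2 : l (m + t • (m - p)) = l m + t * (l m - l p) := by
    rw [map_add, l.map_smul, map_sub, smul_eq_mul]
  rw [h2] at hle
  nlinarith

lemma cofacial_not_interior {P F : Set (Fin d → ℝ)} (hP : Convex ℝ P) (hF : IsProperFace P F)
    {u v : Fin d → ℝ} (hu : u ∈ F) (hv : v ∈ F) : (2⁻¹ : ℝ) • (u + v) ∉ interior P := by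
  intro h
  have hFc : Convex ℝ F := hF.2.2.convex hP
  have hmid : (2⁻¹ : ℝ) • (u + v) ∈ F := by
    have := hFc hu hv (by norm_num : (0:ℝ) ≤ 2⁻¹) (by norm_num : (0:ℝ) ≤ 2⁻¹) (by norm_num)
    rwa [smul_add]
  have := properFace_disjoint_interior hF
  exact absurd (Set.mem_inter hmid h) (by rw [this]; exact Set.notMem_empty _)

lemma neg_mem_extremePoints {P : Set (Fin d → ℝ)} (hsym : P = -P)
    {x : Fin d → ℝ} (hx : x ∈ P.extremePoints ℝ) : -x ∈ P.extremePoints ℝ := by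
  rw [mem_extremePoints] at hx ⊢
  have hmem : ∀ y : Fin d → ℝ, y ∈ P → -y ∈ P := by
    intro y hy
    rw [hsym]
    simpa using hy
  refine ⟨hmem _ hx.1, fun y hy z hz hseg => ?_⟩
  obtain ⟨a, b, ha, hb, hab, hsum⟩ := hseg
  have : a • (-y) + b • (-z) = x := by
    rw [smul_neg, smul_neg, ← neg_add, hsum, neg_neg]
  have h2 := hx.2 (-y) (hmem y hy) (-z) (hmem z hz) ⟨a, b, ha, hb, hab, this⟩
  constructor
  · rw [← h2.1, neg_neg]
  · rw [← h2.2, neg_neg]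

lemma extremePoint_not_interior {P : Set (Fin d → ℝ)} (hd : 0 < d)
    {x : Fin d → ℝ} (hx : x ∈ P.extremePoints ℝ) : x ∉ interior P := by
  intro h
  obtain ⟨ε, hε, hball⟩ := Metric.isOpen_iff.1 isOpen_interior x h
  set w : Fin d → ℝ := fun _ => ε / 2 with hw
  have hwn : ‖w‖ = ε / 2 := by
    haveI : Nonempty (Fin d) := ⟨⟨0, hd⟩⟩
    rw [hw]
    rw [pi_norm_const (ε / 2), Real.norm_eq_abs, abs_of_pos (by linarith)]
  have h1 : x - w ∈ P := by
    apply interior_subset; apply hball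
    rw [Metric.mem_ball, dist_eq_norm]
    have : x - w - x = -w := by abel
    rw [this, norm_neg, hwn]; linarith
  have h2 : x + w ∈ P := by
    apply interior_subset; apply hball
    rw [Metric.mem_ball, dist_eq_norm]
    have : x + w - x = w := by abel
    rw [this, hwn]; linarith
  rw [mem_extremePoints] at hx
  have hseg : x ∈ openSegment ℝ (x - w) (x + w) := by
    refine ⟨2⁻¹, 2⁻¹, by norm_num, by norm_num, by norm_num, ?_⟩
    module
  have h3 := (hx.2 _ h1 _ h2 hseg).1
  have hw0 : w = 0 := sub_eq_self.mp h3
  have := congrFun hw0 ⟨0, hd⟩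
  simp only [hw, Pi.zero_apply] at this
  linarith

lemma eq_convexHull_extremePoints {P : Set (Fin d → ℝ)} (hcomp : IsCompact P)
    (hconv : Convex ℝ P) (hfin : (P.extremePoints ℝ).Finite) :
    P = convexHull ℝ (P.extremePoints ℝ) := by
  have h := closure_convexHull_extremePoints hcomp hconv
  rw [IsClosed.closure_eq (hfin.isClosed_convexHull ℝ)] at h
  exact h.symm

lemma face_eq_inter_affineSpan {P F : Set (Fin d → ℝ)} (hF : IsProperFace P F) :
    F = P ∩ (affineSpan ℝ F : Set (Fin d → ℝ)) := by
  obtain ⟨l, hl⟩ := hF.2.2 hF.1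
  obtain ⟨x₀, hx₀⟩ := hF.1
  have hx₀' : x₀ ∈ P ∧ ∀ y ∈ P, l y ≤ l x₀ := by rw [hl] at hx₀; exact hx₀
  apply subset_antisymm
  · exact Set.subset_inter hF.2.2.subset (subset_affineSpan ℝ F)
  · rintro x ⟨hxP, hxspan⟩
    set A : AffineSubspace ℝ (Fin d → ℝ) :=
      AffineSubspace.comap l.toLinearMap.toAffineMap
        (AffineSubspace.mk' (l x₀) (⊥ : Submodule ℝ ℝ)) with hA
    have hmemA : ∀ z : Fin d → ℝ, z ∈ A ↔ l z = l x₀ := by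
      intro z
      rw [hA, AffineSubspace.mem_comap, AffineSubspace.mem_mk', Submodule.mem_bot,
        vsub_eq_sub, sub_eq_zero]
      exact Iff.rfl
    have hFA : affineSpan ℝ F ≤ A := by
      rw [affineSpan_le]
      intro z hz
      rw [SetLike.mem_coe, hmemA]
      have hz' : z ∈ P ∧ ∀ y ∈ P, l y ≤ l z := by rw [hl] at hz; exact hz
      exact le_antisymm (hx₀'.2 z hz'.1) (hz'.2 x₀ hx₀'.1)
    have hxlev : l x = l x₀ := (hmemA x).1 (hFA hxspan)
    rw [hl]
    exact ⟨hxP, fun y hy => hxlev ▸ hx₀'.2 y hy⟩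

lemma exists_face_vertexset {P F : Set (Fin d → ℝ)} (hcomp : IsCompact P) (hconv : Convex ℝ P)
    (hfin : (P.extremePoints ℝ).Finite) (hF : IsProperFace P F) :
    ∃ S : Finset (Fin d → ℝ), ↑S ⊆ P.extremePoints ℝ ∧ ↑S ⊆ F ∧
      S.card = Module.finrank ℝ (affineSpan ℝ F).direction + 1 ∧
      affineSpan ℝ (↑S : Set (Fin d → ℝ)) = affineSpan ℝ F := by
  have hFcl : IsClosed F := hF.2.2.isClosed hcomp.isClosed
  have hFcomp : IsCompact F := hcomp.of_isClosed_subset hFcl hF.2.2.subset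
  have hFconv : Convex ℝ F := hF.2.2.convex hconv
  have hEsub : F.extremePoints ℝ ⊆ P.extremePoints ℝ :=
    (hF.2.2.isExtreme).extremePoints_subset_extremePoints
  have hEfin : (F.extremePoints ℝ).Finite := hfin.subset hEsub
  have hFhull : F = convexHull ℝ (F.extremePoints ℝ) :=
    eq_convexHull_extremePoints hFcomp hFconv hEfin
  obtain ⟨t, hts, hspan, hind⟩ := exists_affineIndependent ℝ (Fin d → ℝ) (F.extremePoints ℝ)
  have hspan' : affineSpan ℝ t = affineSpan ℝ F := by
    rw [hspan]
    conv_rhs => rw [hFhull]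
    rw [affineSpan_convexHull]
  have htfin : t.Finite := hEfin.subset hts
  haveI := htfin.fintype
  refine ⟨t.toFinset, ?_, ?_, ?_, ?_⟩
  · rw [Set.coe_toFinset]
    exact (hts.trans hEsub)
  · rw [Set.coe_toFinset]
    exact hts.trans (fun x hx => hx.1)
  · -- cardinality
    have htne : t.Nonempty := by
      by_contra hne
      rw [Set.not_nonempty_iff_eq_empty] at hne
      obtain ⟨x₀, hx₀⟩ := hF.1
      have : x₀ ∈ affineSpan ℝ t := hspan' ▸ subset_affineSpan ℝ F hx₀
      rw [hne, AffineSubspace.span_empty] at this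
      exact AffineSubspace.notMem_bot ℝ _ x₀ this
    have hcard : 0 < Fintype.card t := Fintype.card_pos_iff.2 (Set.nonempty_coe_sort.2 htne)
    obtain ⟨n, hn⟩ : ∃ n, Fintype.card t = n + 1 :=
      ⟨Fintype.card t - 1, (Nat.succ_pred_eq_of_pos hcard).symm⟩
    have hfr := hind.finrank_vectorSpan hn
    rw [Subtype.range_coe] at hfr
    have : (affineSpan ℝ F).direction = vectorSpan ℝ t := by
      rw [← hspan', direction_affineSpan]
    rw [Set.toFinset_card, hn, this, hfr]
  · rw [Set.coe_toFinset]
    exact hspan'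

open scoped Pointwise in
open scoped Classical in
lemma volume_pair_bound {P : Set (Fin d → ℝ)} (hcomp : IsCompact P) (hconv : Convex ℝ P)
    (hsym : P = -P) (hfull : affineSpan ℝ P = ⊤) (V' : Finset (Fin d → ℝ))
    (hV'P : ↑V' ⊆ P) (T : Finset ((Fin d → ℝ) × (Fin d → ℝ)))
    (hTmem : ∀ p, p ∈ T ↔ p ∈ V' ×ˢ V' ∧ p.1 ≠ p.2 ∧ (2⁻¹ : ℝ) • (p.1 - p.2) ∈ interior P) :
    V'.card ^ 2 ≤ 2 ^ d * (V'.card + T.card) := by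
  have hd_rank : Module.finrank ℝ (Fin d → ℝ) = d := Module.finrank_fin_fun ℝ
  have hint : (interior P).Nonempty :=
    hconv.interior_nonempty_iff_affineSpan_eq_top.mpr hfull
  have hμpos : 0 < volume P :=
    lt_of_lt_of_le (isOpen_interior.measure_pos volume hint) (measure_mono interior_subset)
  have hμtop : volume P ≠ ⊤ := hcomp.measure_lt_top.ne
  have hPmeas : MeasurableSet P := hcomp.isClosed.measurableSet
  set Q : (Fin d → ℝ) → Set (Fin d → ℝ) :=
    fun u => (fun x => (2⁻¹ : ℝ) • u + (2⁻¹ : ℝ) • x) '' P with hQ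
  have hQsub : ∀ u ∈ V', Q u ⊆ P := by
    rintro u hu z ⟨x, hx, rfl⟩
    exact hconv (hV'P hu) hx (by norm_num) (by norm_num) (by norm_num)
  have hQcomp : ∀ u, IsCompact (Q u) := fun u => hcomp.image (by fun_prop)
  have hQmeas : ∀ u, MeasurableSet (Q u) := fun u => (hQcomp u).isClosed.measurableSet
  -- homeomorph description
  have h2ne : (2⁻¹ : ℝ) ≠ 0 := by norm_num
  set φ : (Fin d → ℝ) → (Fin d → ℝ) ≃ₜ (Fin d → ℝ) := fun u =>
    (Homeomorph.smulOfNeZero (2⁻¹ : ℝ) h2ne).trans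
      (Homeomorph.addLeft ((2⁻¹ : ℝ) • u)) with hφ
  have hφapp : ∀ u x, φ u x = (2⁻¹ : ℝ) • u + (2⁻¹ : ℝ) • x := fun u x => rfl
  have hQφ : ∀ u, Q u = φ u '' P := by
    intro u; rw [hQ]; rfl
  have hQconv : ∀ u, Convex ℝ (Q u) := by
    intro u
    have h1 : Q u = ((2⁻¹ : ℝ) • u) +ᵥ ((2⁻¹ : ℝ) • P) := by
      conv_rhs => rw [← Set.image_smul, ← Set.image_vadd, Set.image_image]
      rfl
    rw [h1]
    exact (hconv.smul _).vadd _
  have hμQ : ∀ u, volume (Q u) = (2 ^ d : ℝ≥0∞)⁻¹ * volume P := by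
    intro u
    have him : Q u = (fun z => ((2⁻¹ : ℝ) • u) + z) '' ((2⁻¹ : ℝ) • P) := by
      conv_rhs => rw [← Set.image_smul, Set.image_image]
    rw [him, Set.image_add_left, measure_preimage_add,
      Measure.addHaar_smul_of_nonneg volume (by norm_num : (0:ℝ) ≤ 2⁻¹) P, hd_rank]
    congr 1
    rw [ENNReal.ofReal_pow (by norm_num : (0:ℝ) ≤ 2⁻¹)]
    have h12 : ENNReal.ofReal 2⁻¹ = (2 : ℝ≥0∞)⁻¹ := by
      rw [ENNReal.ofReal_inv_of_pos (by norm_num : (0:ℝ) < 2)]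
      norm_num
    rw [h12, ENNReal.inv_pow]
  have hQzero : ∀ u v : Fin d → ℝ, u ≠ v → (2⁻¹ : ℝ) • (u - v) ∉ interior P →
      volume (Q u ∩ Q v) = 0 := by
    intro u v huv hni
    have hconvI : Convex ℝ (Q u ∩ Q v) := (hQconv u).inter (hQconv v)
    have hclosed : IsClosed (Q u ∩ Q v) := (hQcomp u).isClosed.inter (hQcomp v).isClosed
    have hint_empty : interior (Q u ∩ Q v) = ∅ := by
      by_contra h
      obtain ⟨z, hz⟩ := Set.nonempty_iff_ne_empty.2 h
      have hz1 : z ∈ interior (Q u) := interior_mono Set.inter_subset_left hz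
      have hz2 : z ∈ interior (Q v) := interior_mono Set.inter_subset_right hz
      rw [hQφ u, ← (φ u).image_interior] at hz1
      rw [hQφ v, ← (φ v).image_interior] at hz2
      obtain ⟨x, hxint, hxeq⟩ := hz1
      obtain ⟨y, hyint, hyeq⟩ := hz2
      rw [hφapp] at hxeq hyeq
      have hnegx : -x ∈ interior P := by
        have hopen : IsOpen (-(interior P)) := isOpen_interior.neg
        have hsubP : -(interior P) ⊆ P := by
          intro y hy
          rw [Set.mem_neg] at hy
          rw [hsym, Set.mem_neg]
          exact interior_subset hy
        exact interior_maximal hsubP hopen (by rwa [Set.mem_neg, neg_neg])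
      have heq : (2⁻¹ : ℝ) • (u - v) = (2⁻¹ : ℝ) • y + (2⁻¹ : ℝ) • (-x) := by
        have h1 : (2⁻¹ : ℝ) • u + (2⁻¹ : ℝ) • x = (2⁻¹ : ℝ) • v + (2⁻¹ : ℝ) • y := by
          rw [hxeq, hyeq]
        have h2 : (2⁻¹ : ℝ) • u - (2⁻¹ : ℝ) • v = (2⁻¹ : ℝ) • y - (2⁻¹ : ℝ) • x := by
          rw [sub_eq_sub_iff_add_eq_add]
          rw [h1]; abel
        rw [smul_sub, h2, smul_neg]
        abel
      have : (2⁻¹ : ℝ) • (u - v) ∈ interior P := by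
        rw [heq]
        exact hconv.interior hyint hnegx (by norm_num) (by norm_num) (by norm_num)
      exact hni this
    have hsub : Q u ∩ Q v ⊆ frontier (Q u ∩ Q v) := by
      rw [frontier, hclosed.closure_eq, hint_empty, Set.diff_empty]
    exact measure_mono_null hsub (hconvI.addHaar_frontier volume)
  -- the counting function
  set Nc : ℝ≥0∞ := (V'.card : ℝ≥0∞) with hNc
  set m : (Fin d → ℝ) → ℝ≥0∞ := fun x => ∑ u ∈ V', (Q u).indicator 1 x with hm
  have hmmeas : Measurable m :=
    Finset.measurable_sum _ (fun u _ => measurable_one.indicator (hQmeas u))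
  have hpt : ∀ x, (2 * Nc * 2 ^ d) * m x ≤
      Nc ^ 2 * P.indicator 1 x + (2 ^ d * 2 ^ d) * (m x) ^ 2 := by
    intro x
    by_cases hx : x ∈ P
    · rw [Set.indicator_of_mem hx]
      calc (2 * Nc * 2 ^ d) * m x = 2 * Nc * ((2 ^ d : ℝ≥0∞) * m x) := by ring
        _ ≤ Nc ^ 2 + ((2 ^ d : ℝ≥0∞) * m x) ^ 2 := amgm _ _
        _ = Nc ^ 2 * 1 + (2 ^ d * 2 ^ d) * (m x) ^ 2 := by ring
    · have hmx : m x = 0 :=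
        Finset.sum_eq_zero fun u hu =>
          Set.indicator_of_notMem (fun hxx => hx (hQsub u hu hxx)) 1
      rw [hmx, Set.indicator_of_notMem hx]
      simp
  have hI1 : ∫⁻ x, m x = Nc * ((2 ^ d : ℝ≥0∞)⁻¹ * volume P) := by
    simp only [hm]
    rw [lintegral_finset_sum _ (fun u _ => measurable_one.indicator (hQmeas u))]
    have : ∀ u ∈ V', ∫⁻ x, (Q u).indicator 1 x = (2 ^ d : ℝ≥0∞)⁻¹ * volume P := by
      intro u _
      rw [lintegral_indicator_one (hQmeas u), hμQ u]
    rw [Finset.sum_congr rfl this, Finset.sum_const, nsmul_eq_mul]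
  have hI2 : ∫⁻ x, (m x) ^ 2 = ∑ u ∈ V', ∑ v ∈ V', volume (Q u ∩ Q v) := by
    have hsq : ∀ x, (m x) ^ 2 = ∑ u ∈ V', ∑ v ∈ V', (Q u ∩ Q v).indicator 1 x := by
      intro x
      rw [hm, sq, Finset.sum_mul_sum]
      refine Finset.sum_congr rfl fun u _ => Finset.sum_congr rfl fun v _ => ?_
      rw [Set.inter_indicator_one]
      rfl
    calc ∫⁻ x, (m x) ^ 2 = ∫⁻ x, ∑ u ∈ V', ∑ v ∈ V', (Q u ∩ Q v).indicator 1 x :=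
          lintegral_congr hsq
      _ = ∑ u ∈ V', ∑ v ∈ V', volume (Q u ∩ Q v) := by
          rw [lintegral_finset_sum _ (fun u _ => Finset.measurable_sum _
            (fun v _ => measurable_one.indicator ((hQmeas u).inter (hQmeas v))))]
          refine Finset.sum_congr rfl fun u _ => ?_
          rw [lintegral_finset_sum _
            (fun v _ => measurable_one.indicator ((hQmeas u).inter (hQmeas v)))]
          exact Finset.sum_congr rfl fun v _ =>
            lintegral_indicator_one ((hQmeas u).inter (hQmeas v))
  have hSig : ∑ u ∈ V', ∑ v ∈ V', volume (Q u ∩ Q v) ≤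
      ((V'.card + T.card : ℕ) : ℝ≥0∞) * ((2 ^ d : ℝ≥0∞)⁻¹ * volume P) := by
    rw [← Finset.sum_product']
    rw [← Finset.sum_filter_add_sum_filter_not (V' ×ˢ V') (fun p => p.1 = p.2)]
    have hdiag : ∑ p ∈ (V' ×ˢ V').filter (fun p => p.1 = p.2), volume (Q p.1 ∩ Q p.2)
        ≤ (V'.card : ℝ≥0∞) * ((2 ^ d : ℝ≥0∞)⁻¹ * volume P) := by
      have hcard : ((V' ×ˢ V').filter (fun p => p.1 = p.2)).card ≤ V'.card := by
        apply Finset.card_le_card_of_injOn (fun p => p.1)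
        · intro p hp
          simp only [Finset.mem_coe, Finset.mem_filter, Finset.mem_product] at hp
          exact hp.1.1
        · intro p hp q hq hpq
          simp only [Finset.mem_coe, Finset.mem_filter] at hp hq
          have : p.2 = q.2 := by rw [← hp.2, ← hq.2]; exact hpq
          exact Prod.ext hpq this
      calc ∑ p ∈ (V' ×ˢ V').filter (fun p => p.1 = p.2), volume (Q p.1 ∩ Q p.2)
          ≤ ((V' ×ˢ V').filter (fun p => p.1 = p.2)).card •
            ((2 ^ d : ℝ≥0∞)⁻¹ * volume P) := by
            apply Finset.sum_le_card_nsmul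
            intro p _
            exact le_of_le_of_eq (measure_mono Set.inter_subset_left) (hμQ p.1)
        _ ≤ (V'.card : ℝ≥0∞) * ((2 ^ d : ℝ≥0∞)⁻¹ * volume P) := by
            rw [nsmul_eq_mul]
            exact mul_le_mul_left (Nat.cast_le.2 hcard) _
    have hoff : ∑ p ∈ (V' ×ˢ V').filter (fun p => ¬ p.1 = p.2), volume (Q p.1 ∩ Q p.2)
        ≤ (T.card : ℝ≥0∞) * ((2 ^ d : ℝ≥0∞)⁻¹ * volume P) := by
      rw [← Finset.sum_filter_add_sum_filter_not
        ((V' ×ˢ V').filter (fun p => ¬ p.1 = p.2))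
        (fun p => (2⁻¹ : ℝ) • (p.1 - p.2) ∈ interior P)]
      have h0 : ∑ p ∈ ((V' ×ˢ V').filter (fun p => ¬ p.1 = p.2)).filter
          (fun p => ¬ ((2⁻¹ : ℝ) • (p.1 - p.2) ∈ interior P)), volume (Q p.1 ∩ Q p.2) = 0 := by
        apply Finset.sum_eq_zero
        intro p hp
        simp only [Finset.mem_filter] at hp
        exact hQzero _ _ hp.1.2 hp.2
      rw [h0, add_zero]
      have hTT : ((V' ×ˢ V').filter (fun p => ¬ p.1 = p.2)).filter
          (fun p => (2⁻¹ : ℝ) • (p.1 - p.2) ∈ interior P) = T := by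
        ext p
        rw [Finset.mem_filter, Finset.mem_filter, hTmem]
        tauto
      rw [hTT]
      calc ∑ p ∈ T, volume (Q p.1 ∩ Q p.2)
          ≤ T.card • ((2 ^ d : ℝ≥0∞)⁻¹ * volume P) := by
            apply Finset.sum_le_card_nsmul
            intro p _
            exact le_of_le_of_eq (measure_mono Set.inter_subset_left) (hμQ p.1)
        _ = (T.card : ℝ≥0∞) * ((2 ^ d : ℝ≥0∞)⁻¹ * volume P) := nsmul_eq_mul _ _
    calc (∑ p ∈ (V' ×ˢ V').filter (fun p => p.1 = p.2), volume (Q p.1 ∩ Q p.2)) +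
          ∑ p ∈ (V' ×ˢ V').filter (fun p => ¬ p.1 = p.2), volume (Q p.1 ∩ Q p.2)
        ≤ (V'.card : ℝ≥0∞) * ((2 ^ d : ℝ≥0∞)⁻¹ * volume P) +
          (T.card : ℝ≥0∞) * ((2 ^ d : ℝ≥0∞)⁻¹ * volume P) := add_le_add hdiag hoff
      _ = ((V'.card + T.card : ℕ) : ℝ≥0∞) * ((2 ^ d : ℝ≥0∞)⁻¹ * volume P) := by
          push_cast
          ring
  -- integrate the pointwise inequality
  have hmain := lintegral_mono (μ := volume) hpt
  rw [lintegral_const_mul _ hmmeas, hI1,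
    lintegral_add_left ((measurable_one.indicator hPmeas).const_mul _),
    lintegral_const_mul _ (measurable_one.indicator hPmeas), lintegral_indicator_one hPmeas,
    lintegral_const_mul _ (hmmeas.pow_const 2), hI2] at hmain
  have h2d0 : (2 ^ d : ℝ≥0∞) ≠ 0 := by positivity
  have h2dt : (2 ^ d : ℝ≥0∞) ≠ ⊤ := ENNReal.pow_ne_top ENNReal.ofNat_ne_top
  have h2dr : (2 ^ d : ℝ≥0∞) * (2 ^ d : ℝ≥0∞)⁻¹ = 1 := ENNReal.mul_inv_cancel h2d0 h2dt
  have hLHS : (2 * Nc * 2 ^ d) * (Nc * ((2 ^ d : ℝ≥0∞)⁻¹ * volume P))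
      = Nc ^ 2 * volume P + Nc ^ 2 * volume P := by
    rw [show (2 * Nc * 2 ^ d) * (Nc * ((2 ^ d : ℝ≥0∞)⁻¹ * volume P))
        = (Nc ^ 2 * volume P + Nc ^ 2 * volume P) * ((2 ^ d : ℝ≥0∞) * (2 ^ d : ℝ≥0∞)⁻¹)
        from by ring, h2dr, mul_one]
  have hchain : Nc ^ 2 * volume P + Nc ^ 2 * volume P ≤
      Nc ^ 2 * volume P + ((V'.card + T.card : ℕ) : ℝ≥0∞) * 2 ^ d * volume P := by
    rw [← hLHS]
    refine hmain.trans ?_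
    refine add_le_add_right ?_ _
    calc (2 ^ d * 2 ^ d : ℝ≥0∞) * ∑ u ∈ V', ∑ v ∈ V', volume (Q u ∩ Q v)
        ≤ (2 ^ d * 2 ^ d : ℝ≥0∞) *
          (((V'.card + T.card : ℕ) : ℝ≥0∞) * ((2 ^ d : ℝ≥0∞)⁻¹ * volume P)) :=
          mul_le_mul_right hSig _
      _ = ((V'.card + T.card : ℕ) : ℝ≥0∞) * 2 ^ d * volume P := by
          rw [show (2 ^ d * 2 ^ d : ℝ≥0∞) *
              (((V'.card + T.card : ℕ) : ℝ≥0∞) * ((2 ^ d : ℝ≥0∞)⁻¹ * volume P))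
              = (((V'.card + T.card : ℕ) : ℝ≥0∞) * 2 ^ d * volume P) *
                ((2 ^ d : ℝ≥0∞) * (2 ^ d : ℝ≥0∞)⁻¹) from by ring, h2dr, mul_one]
  have hNcne : Nc ^ 2 * volume P ≠ ⊤ :=
    ENNReal.mul_ne_top (ENNReal.pow_ne_top (ENNReal.natCast_ne_top _)) hμtop
  have hstep : Nc ^ 2 * volume P ≤ ((V'.card + T.card : ℕ) : ℝ≥0∞) * 2 ^ d * volume P :=
    (ENNReal.add_le_add_iff_left hNcne).1 hchain
  have hfinal : Nc ^ 2 ≤ ((V'.card + T.card : ℕ) : ℝ≥0∞) * 2 ^ d :=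
    (ENNReal.mul_le_mul_iff_left hμpos.ne' hμtop).1 hstep
  have hcast : ((V'.card ^ 2 : ℕ) : ℝ≥0∞) ≤ ((2 ^ d * (V'.card + T.card) : ℕ) : ℝ≥0∞) := by
    push_cast
    rw [mul_comm]
    push_cast at hfinal
    exact hfinal
  exact_mod_cast hcast

theorem stmt7 {d k N : ℕ} (hk : 3 ≤ k) (hkd : 2 * k ≤ d)
    (P : Set (Fin d → ℝ))
    (hpoly : IsPolytope P) (hsym : P = -P) (hfull : affineSpan ℝ P = ⊤)
    (hN : (P.extremePoints ℝ).ncard = N) (hNd : 2 * d ≤ N) :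
    (faceCount P (k - 1) : ℝ) ≤
      (1 - 2 ^ (-(d : ℤ))) * ((N : ℝ) / ((N : ℝ) - 1)) * (N.choose k) := by
  classical
  obtain ⟨V₀, hPV₀⟩ := hpoly
  have hconv : Convex ℝ P := by rw [hPV₀]; exact convex_convexHull _ _
  have hcomp : IsCompact P := by rw [hPV₀]; exact V₀.finite_toSet.isCompact_convexHull ℝ
  have hVsub : P.extremePoints ℝ ⊆ ↑V₀ := by
    rw [hPV₀]; exact extremePoints_convexHull_subset
  have hVfin : (P.extremePoints ℝ).Finite := V₀.finite_toSet.subset hVsub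
  set V' : Finset (Fin d → ℝ) := hVfin.toFinset with hV'
  have hV'mem : ∀ x, x ∈ V' ↔ x ∈ P.extremePoints ℝ := fun x => hVfin.mem_toFinset
  have hV'card : V'.card = N := by
    rw [← hN, hV']
    exact (Set.ncard_eq_toFinset_card _ hVfin).symm
  have hV'P : ↑V' ⊆ P := by
    intro x hx
    rw [Finset.mem_coe, hV'mem] at hx
    exact hx.1
  have hd6 : 6 ≤ d := le_trans (by omega) hkd
  have hd0 : 0 < d := by omega
  have hN12 : 12 ≤ N := le_trans (by omega) hNd
  have hkN : k ≤ N := by omega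
  have hk2 : 2 ≤ k := by omega
  -- cofacial predicate
  set cofS : Finset (Fin d → ℝ) → Prop := fun S => ∃ F, IsProperFace P F ∧ ↑S ⊆ F with hcofS
  set A : Finset (Finset (Fin d → ℝ)) := (V'.powersetCard k).filter cofS with hA
  set B : Finset (Finset (Fin d → ℝ)) := (V'.powersetCard 2).filter cofS with hB
  set Bc : Finset (Finset (Fin d → ℝ)) := (V'.powersetCard 2).filter (fun S => ¬ cofS S) with hBc
  -- STEP 1 : faceCount ≤ A.card
  have hstep1 : faceCount P (k - 1) ≤ A.card := by
    set Fam : Set (Set (Fin d → ℝ)) := {F | IsProperFace P F ∧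
      Module.finrank ℝ (affineSpan ℝ F).direction = k - 1} with hFam
    have hchoice : ∀ F ∈ Fam, ∃ S : Finset (Fin d → ℝ),
        (↑S ⊆ P.extremePoints ℝ) ∧ (↑S : Set (Fin d → ℝ)) ⊆ F ∧ S.card = k ∧
        affineSpan ℝ (↑S : Set (Fin d → ℝ)) = affineSpan ℝ F := by
      intro F hF
      obtain ⟨S, h1, h2, h3, h4⟩ := exists_face_vertexset hcomp hconv hVfin hF.1
      refine ⟨S, h1, h2, ?_, h4⟩
      rw [h3, hF.2]
      omega
    choose! f hf1 hf2 hf3 hf4 using hchoice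
    have hmaps : ∀ F ∈ Fam, f F ∈ A := by
      intro F hF
      rw [hA, Finset.mem_filter, Finset.mem_powersetCard]
      refine ⟨⟨?_, hf3 F hF⟩, F, hF.1, hf2 F hF⟩
      intro x hx
      rw [hV'mem]
      exact hf1 F hF hx
    have hinj : Set.InjOn f Fam := by
      intro F hF G hG hFG
      have hspan : affineSpan ℝ F = affineSpan ℝ G := by
        rw [← hf4 F hF, hFG, hf4 G hG]
      rw [face_eq_inter_affineSpan hF.1, face_eq_inter_affineSpan hG.1, hspan]
    have himsub : f '' Fam ⊆ ↑A := by
      rintro y ⟨F, hF, rfl⟩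
      exact hmaps F hF
    have hFamfin : Fam.Finite :=
      Set.Finite.of_finite_image (A.finite_toSet.subset himsub) hinj
    calc faceCount P (k - 1) = Fam.ncard := rfl
      _ = (f '' Fam).ncard := (Set.ncard_image_of_injOn hinj).symm
      _ ≤ (↑A : Set (Finset (Fin d → ℝ))).ncard :=
          Set.ncard_le_ncard himsub A.finite_toSet
      _ = A.card := Set.ncard_coe_finset A
  -- STEP 2 : A.card * C(k,2) ≤ B.card * C(N-2, k-2)
  have hstep2 : A.card * k.choose 2 ≤ B.card * (N - 2).choose (k - 2) := by
    set W : Finset (Finset (Fin d → ℝ) × Finset (Fin d → ℝ)) :=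
      (B ×ˢ A).filter (fun q => q.1 ⊆ q.2) with hW
    have hAprop : ∀ S ∈ A, S ⊆ V' ∧ S.card = k ∧ cofS S := by
      intro S hS
      rw [hA, Finset.mem_filter, Finset.mem_powersetCard] at hS
      exact ⟨hS.1.1, hS.1.2, hS.2⟩
    have hBprop : ∀ p ∈ B, p ⊆ V' ∧ p.card = 2 ∧ cofS p := by
      intro p hp
      rw [hB, Finset.mem_filter, Finset.mem_powersetCard] at hp
      exact ⟨hp.1.1, hp.1.2, hp.2⟩
    have hlow : A.card * k.choose 2 ≤ W.card := by
      have hWsum : W.card = ∑ S ∈ A, (W.filter (fun q => q.2 = S)).card := by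
        apply Finset.card_eq_sum_card_fiberwise
        intro q hq
        rw [Finset.mem_coe, hW, Finset.mem_filter, Finset.mem_product] at hq
        exact hq.1.2
      rw [hWsum]
      have : ∀ S ∈ A, k.choose 2 ≤ (W.filter (fun q => q.2 = S)).card := by
        intro S hS
        obtain ⟨hSV, hScard, hScof⟩ := hAprop S hS
        have hcnt : (S.powersetCard 2).card ≤ (W.filter (fun q => q.2 = S)).card := by
          apply Finset.card_le_card_of_injOn (fun p => (p, S))
          · intro p hp
            rw [Finset.mem_coe, Finset.mem_powersetCard] at hp
            rw [Finset.mem_coe, Finset.mem_filter, hW, Finset.mem_filter, Finset.mem_product]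
            refine ⟨⟨⟨?_, hS⟩, hp.1⟩, rfl⟩
            rw [hB, Finset.mem_filter, Finset.mem_powersetCard]
            obtain ⟨F, hFface, hFsub⟩ := hScof
            exact ⟨⟨hp.1.trans hSV, hp.2⟩, F, hFface,
              (Finset.coe_subset.2 hp.1).trans hFsub⟩
          · intro p _ q _ hpq
            exact congrArg Prod.fst hpq
        rw [Finset.card_powersetCard, hScard] at hcnt
        exact hcnt
      calc A.card * k.choose 2 = ∑ _S ∈ A, k.choose 2 := by
            rw [Finset.sum_const, smul_eq_mul]
        _ ≤ ∑ S ∈ A, (W.filter (fun q => q.2 = S)).card := Finset.sum_le_sum this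
    have hhigh : W.card ≤ B.card * (N - 2).choose (k - 2) := by
      have hWsum : W.card = ∑ p ∈ B, (W.filter (fun q => q.1 = p)).card := by
        apply Finset.card_eq_sum_card_fiberwise
        intro q hq
        rw [Finset.mem_coe, hW, Finset.mem_filter, Finset.mem_product] at hq
        exact hq.1.1
      rw [hWsum]
      have hfib : ∀ p ∈ B, (W.filter (fun q => q.1 = p)).card ≤ (N - 2).choose (k - 2) := by
        intro p hp
        obtain ⟨hpV, hpcard, _⟩ := hBprop p hp
        have : (W.filter (fun q => q.1 = p)).card ≤ ((V' \ p).powersetCard (k - 2)).card := by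
          apply Finset.card_le_card_of_injOn (fun q => q.2 \ p)
          · intro q hq
            rw [Finset.mem_coe, Finset.mem_filter, hW, Finset.mem_filter, Finset.mem_product] at hq
            obtain ⟨⟨⟨hqB, hqA⟩, hq12⟩, hq1p⟩ := hq
            obtain ⟨hq2V, hq2card, _⟩ := hAprop q.2 hqA
            have hpq2 : p ⊆ q.2 := hq1p ▸ hq12
            rw [Finset.mem_coe, Finset.mem_powersetCard]
            constructor
            · exact Finset.sdiff_subset_sdiff hq2V (le_refl p)
            · rw [Finset.card_sdiff_of_subset hpq2, hq2card, hpcard]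
          · intro q hq r hr hqr
            rw [Finset.mem_coe, Finset.mem_filter, hW, Finset.mem_filter,
              Finset.mem_product] at hq hr
            have hpq : p ⊆ q.2 := hq.2 ▸ hq.1.2
            have hpr : p ⊆ r.2 := hr.2 ▸ hr.1.2
            have hqr' : q.2 \ p = r.2 \ p := hqr
            have h2 : q.2 = r.2 := by
              rw [← Finset.sdiff_union_of_subset hpq, ← Finset.sdiff_union_of_subset hpr, hqr']
            exact Prod.ext (by rw [hq.2, hr.2]) h2
        rw [Finset.card_powersetCard, Finset.card_sdiff_of_subset hpV, hV'card, hpcard] at this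
        exact this
      calc ∑ p ∈ B, (W.filter (fun q => q.1 = p)).card
          ≤ ∑ _p ∈ B, (N - 2).choose (k - 2) := Finset.sum_le_sum hfib
        _ = B.card * (N - 2).choose (k - 2) := by rw [Finset.sum_const, smul_eq_mul]
    exact hlow.trans hhigh
  -- STEP 3
  set T := ((V' ×ˢ V').filter
    (fun p => p.1 ≠ p.2 ∧ (2⁻¹ : ℝ) • (p.1 - p.2) ∈ interior P)) with hT
  have hvol := volume_pair_bound hcomp hconv hsym hfull V' hV'P T
    (fun p => by rw [hT, Finset.mem_filter])
  have hTne : ∀ p ∈ T, p.1 ≠ -p.2 := by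
    intro p hpT heq
    rw [hT, Finset.mem_filter, Finset.mem_product] at hpT
    obtain ⟨⟨hp1V, hp2V⟩, hpne, hpint⟩ := hpT
    have hp1e : p.1 ∈ P.extremePoints ℝ := (hV'mem _).1 hp1V
    have h2 : p.2 = -p.1 := by rw [heq, neg_neg]
    have hmid : (2⁻¹ : ℝ) • (p.1 - p.2) = p.1 := by rw [h2]; module
    rw [hmid] at hpint
    exact extremePoint_not_interior hd0 hp1e hpint
  have hTBc : T.card ≤ 2 * Bc.card := by
    have himg : T.image (fun p => ({p.1, -p.2} : Finset (Fin d → ℝ))) ⊆ Bc := by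
      intro S hS
      rw [Finset.mem_image] at hS
      obtain ⟨p, hpT, rfl⟩ := hS
      have hne2 : p.1 ≠ -p.2 := hTne p hpT
      rw [hT, Finset.mem_filter, Finset.mem_product] at hpT
      obtain ⟨⟨hp1V, hp2V⟩, hpne, hpint⟩ := hpT
      have hp2e : p.2 ∈ P.extremePoints ℝ := (hV'mem _).1 hp2V
      have hnp2e : -p.2 ∈ P.extremePoints ℝ := neg_mem_extremePoints hsym hp2e
      have hcard2 : ({p.1, -p.2} : Finset (Fin d → ℝ)).card = 2 := by
        rw [Finset.card_insert_of_notMem (by simp [hne2]), Finset.card_singleton]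
      rw [hBc, Finset.mem_filter, Finset.mem_powersetCard]
      refine ⟨⟨?_, hcard2⟩, ?_⟩
      · intro x hx
        rw [Finset.mem_insert, Finset.mem_singleton] at hx
        rcases hx with rfl | rfl
        · exact hp1V
        · rw [hV'mem]; exact hnp2e
      · rintro ⟨F, hFface, hFsub⟩
        have h1F : p.1 ∈ F := hFsub (by simp)
        have h2F : -p.2 ∈ F := hFsub (by simp)
        have hni := cofacial_not_interior hconv hFface h1F h2F
        rw [← sub_eq_add_neg] at hni
        exact hni hpint
    have hfiber : ∀ S ∈ T.image (fun p => ({p.1, -p.2} : Finset (Fin d → ℝ))),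
        (T.filter (fun p => ({p.1, -p.2} : Finset (Fin d → ℝ)) = S)).card ≤ 2 := by
      intro S hS
      have hSBc := himg hS
      rw [hBc, Finset.mem_filter, Finset.mem_powersetCard] at hSBc
      obtain ⟨a, b, hab, rfl⟩ := Finset.card_eq_two.1 hSBc.1.2
      have hsub : T.filter (fun p => ({p.1, -p.2} : Finset (Fin d → ℝ)) = {a, b})
          ⊆ ({(a, -b), (b, -a)} : Finset ((Fin d → ℝ) × (Fin d → ℝ))) := by
        intro p hp
        rw [Finset.mem_filter] at hp
        obtain ⟨hpT, hpS⟩ := hp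
        have hne2 : p.1 ≠ -p.2 := hTne p hpT
        have h1mem : p.1 ∈ ({a, b} : Finset (Fin d → ℝ)) := by
          rw [← hpS]; simp
        have h2mem : -p.2 ∈ ({a, b} : Finset (Fin d → ℝ)) := by
          rw [← hpS]; simp
        rw [Finset.mem_insert, Finset.mem_singleton] at h1mem h2mem
        rw [Finset.mem_insert, Finset.mem_singleton]
        rcases h1mem with h1 | h1
        · left
          rcases h2mem with h2 | h2
          · exact absurd (h1.trans h2.symm) hne2
          · exact Prod.ext h1 (by rw [← h2, neg_neg])
        · right
          rcases h2mem with h2 | h2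
          · exact Prod.ext h1 (by rw [← h2, neg_neg])
          · exact absurd (h1.trans h2.symm) hne2
      calc (T.filter (fun p => ({p.1, -p.2} : Finset (Fin d → ℝ)) = {a, b})).card
          ≤ ({(a, -b), (b, -a)} : Finset ((Fin d → ℝ) × (Fin d → ℝ))).card :=
            Finset.card_le_card hsub
        _ ≤ 2 := Finset.card_insert_le _ _ |>.trans (by simp)
    calc T.card ≤ 2 * (T.image (fun p => ({p.1, -p.2} : Finset (Fin d → ℝ)))).card :=
          Finset.card_le_mul_card_image _ 2 hfiber
      _ ≤ 2 * Bc.card := Nat.mul_le_mul_left _ (Finset.card_le_card himg)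
  have hbc : B.card + Bc.card = N.choose 2 := by
    rw [hB, hBc, Finset.card_filter_add_card_filter_not,
      Finset.card_powersetCard, hV'card]
  have hN2 : N ^ 2 ≤ 2 ^ d * (N + 2 * Bc.card) := by
    rw [hV'card] at hvol
    exact le_trans hvol (Nat.mul_le_mul_left _ (by omega))
  -- FINAL arithmetic over ℝ
  have hidnat := Nat.choose_mul (n := N) hk2
  have hCk2pos : (0:ℝ) < (k.choose 2 : ℝ) := by exact_mod_cast Nat.choose_pos hk2
  have h2dpos : (0:ℝ) < 2 ^ d := by positivity
  have hzpow : (2:ℝ) ^ (-(d:ℤ)) = ((2:ℝ) ^ d)⁻¹ := by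
    rw [zpow_neg, zpow_natCast]
  have hNR : (12:ℝ) ≤ (N:ℝ) := by exact_mod_cast hN12
  have hAR : (A.card : ℝ) * (k.choose 2 : ℝ) ≤ (B.card : ℝ) * ((N - 2).choose (k - 2) : ℝ) := by
    exact_mod_cast hstep2
  have hBR : (B.card : ℝ) = (N.choose 2 : ℝ) - (Bc.card : ℝ) := by
    have : (B.card : ℝ) + (Bc.card : ℝ) = (N.choose 2 : ℝ) := by exact_mod_cast hbc
    linarith
  have hBcR : (N:ℝ) ^ 2 ≤ 2 ^ d * ((N:ℝ) + 2 * (Bc.card : ℝ)) := by exact_mod_cast hN2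
  have hC2R : (N.choose 2 : ℝ) = (N:ℝ) * ((N:ℝ) - 1) / 2 := Nat.cast_choose_two (K := ℝ) N
  have hface : (faceCount P (k - 1) : ℝ) ≤ (A.card : ℝ) := by exact_mod_cast hstep1
  refine hface.trans ?_
  rw [← mul_le_mul_iff_left₀ hCk2pos]
  have hidR : (N.choose k : ℝ) * (k.choose 2 : ℝ)
      = (N.choose 2 : ℝ) * ((N - 2).choose (k - 2) : ℝ) := by exact_mod_cast hidnat
  have hRHS : (1 - (2:ℝ) ^ (-(d:ℤ))) * ((N:ℝ) / ((N:ℝ) - 1)) * (N.choose k : ℝ) * (k.choose 2 : ℝ)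
      = (1 - ((2:ℝ) ^ d)⁻¹) * ((N:ℝ) ^ 2 / 2) * ((N - 2).choose (k - 2) : ℝ) := by
    calc (1 - (2:ℝ) ^ (-(d:ℤ))) * ((N:ℝ) / ((N:ℝ) - 1)) * (N.choose k : ℝ) * (k.choose 2 : ℝ)
        = (1 - ((2:ℝ) ^ d)⁻¹) * ((N:ℝ) / ((N:ℝ) - 1)) *
          ((N.choose k : ℝ) * (k.choose 2 : ℝ)) := by rw [hzpow]; ring
      _ = (1 - ((2:ℝ) ^ d)⁻¹) * ((N:ℝ) / ((N:ℝ) - 1)) *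
          ((N.choose 2 : ℝ) * ((N - 2).choose (k - 2) : ℝ)) := by rw [hidR]
      _ = (1 - ((2:ℝ) ^ d)⁻¹) * ((N:ℝ) ^ 2 / 2) * ((N - 2).choose (k - 2) : ℝ) := by
          rw [hC2R]
          have hne : (N:ℝ) - 1 ≠ 0 := by linarith
          field_simp
  rw [hRHS]
  have hCN2k2nn : (0:ℝ) ≤ ((N - 2).choose (k - 2) : ℝ) := Nat.cast_nonneg _
  have hkey : (B.card : ℝ) ≤ (1 - ((2:ℝ) ^ d)⁻¹) * ((N:ℝ) ^ 2 / 2) := by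
    rw [hBR, hC2R]
    have hdiv : (N:ℝ) ^ 2 / 2 ^ d ≤ (N:ℝ) + 2 * (Bc.card : ℝ) := by
      rw [div_le_iff₀ h2dpos]
      calc (N:ℝ) ^ 2 ≤ 2 ^ d * ((N:ℝ) + 2 * (Bc.card : ℝ)) := hBcR
        _ = ((N:ℝ) + 2 * (Bc.card : ℝ)) * 2 ^ d := by ring
    have hinv : ((2:ℝ) ^ d)⁻¹ * (N:ℝ) ^ 2 = (N:ℝ) ^ 2 / 2 ^ d := by ring
    nlinarith [hdiv]
  calc (A.card : ℝ) * (k.choose 2 : ℝ) ≤ (B.card : ℝ) * ((N - 2).choose (k - 2) : ℝ) := hAR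
    _ ≤ ((1 - ((2:ℝ) ^ d)⁻¹) * ((N:ℝ) ^ 2 / 2)) * ((N - 2).choose (k - 2) : ℝ) :=
        mul_le_mul_of_nonneg_right hkey hCN2k2nn
    _ = (1 - ((2:ℝ) ^ d)⁻¹) * ((N:ℝ) ^ 2 / 2) * ((N - 2).choose (k - 2) : ℝ) := by ring
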